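/- Let {(Q_i, S_i, μ_i) : i ∈ I} be a family of fuzzy skill functions whose merge (Q, S, μ) is a distributed fuzzy skill function, let (Q, 𝒦) be the knowledge structure delineated by (Q, S, μ), and for each i ∈ I let (Q_i, 𝒦_i) be the knowledge structure delineated by (Q_i, S_i, μ_i). Suppose both families {Q_i : i ∈ I} and {S_i : i ∈ I} are pairwise disjoint. Then (Q, 𝒦) is discriminative if and only if every (Q_i, 𝒦_i) is discriminative, and (Q, 𝒦) is bi-discriminative if and only if every (Q_i, 𝒦_i) is bi-discriminative. -/
import Mathlib


/-- A fuzzy set on a set `S` of skills: a function `S → [0,1]`, ordered pointwise. -/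
abbrev FuzzySet (S : Type*) := S → unitInterval

/-- The problem function induced by a fuzzy skill multimap `μ`:
`p(F) = {q | ∃ C ∈ μ(q), C ⊆ F}`. -/
def pfun {Q S : Type*} (μ : Q → Set (FuzzySet S)) (F : FuzzySet S) : Set Q :=
  {q | ∃ C ∈ μ q, C ≤ F}

/-- The knowledge structure delineated by a fuzzy skill multimap `μ`. -/
def delineated {Q S : Type*} (μ : Q → Set (FuzzySet S)) : Set (Set Q) :=
  Set.range (pfun μ)

/-- `𝒦_q = {K ∈ 𝒦 | q ∈ K}`. -/
def Kq {Q : Type*} (𝒦 : Set (Set Q)) (q : Q) : Set (Set Q) := {K ∈ 𝒦 | q ∈ K}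

/-- A knowledge structure is discriminative if `𝒦_q ≠ 𝒦_r` for distinct `q, r`. -/
def Discriminative {Q : Type*} (𝒦 : Set (Set Q)) : Prop :=
  ∀ q r : Q, q ≠ r → Kq 𝒦 q ≠ Kq 𝒦 r

/-- A knowledge structure is bi-discriminative if `𝒦_q ⊄ 𝒦_r` and `𝒦_r ⊄ 𝒦_q`
for distinct `q, r`. -/
def BiDiscriminative {Q : Type*} (𝒦 : Set (Set Q)) : Prop :=
  ∀ q r : Q, q ≠ r → ¬ Kq 𝒦 q ⊆ Kq 𝒦 r ∧ ¬ Kq 𝒦 r ⊆ Kq 𝒦 q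

/-- `μ` is a fuzzy skill multimap: each `μ(q)` is a nonempty family of nonzero fuzzy sets. -/
def FSM {Q S : Type*} (μ : Q → Set (FuzzySet S)) : Prop :=
  ∀ q, (μ q).Nonempty ∧ ∀ C ∈ μ q, C ≠ 0

/-- A molecule: a fuzzy set with exactly one skill of nonzero membership. -/
def Molecule {S : Type*} (T : FuzzySet S) : Prop := ∃! s, T s ≠ 0

/-- A knowledge space: a knowledge structure closed under unions of arbitrary subfamilies. -/
def IsKSpace {Q : Type*} (𝒦 : Set (Set Q)) : Prop :=
  ∅ ∈ 𝒦 ∧ Set.univ ∈ 𝒦 ∧ ∀ 𝒮 ⊆ 𝒦, ⋃₀ 𝒮 ∈ 𝒦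


lemma kq_subset_iff' {Q : Type*} (𝒦 : Set (Set Q)) (q r : Q) :
    Kq 𝒦 q ⊆ Kq 𝒦 r ↔ ∀ K ∈ 𝒦, q ∈ K → r ∈ K := by
  constructor
  · intro h K hK hq
    exact (h ⟨hK, hq⟩).2
  · rintro h K ⟨hK, hq⟩
    exact ⟨hK, h K hK hq⟩

/-- For a family of fuzzy skill functions `(Q_i, S_i, μ_i)` whose merge
`(Q, S, μ)` is a distributed fuzzy skill function, if both the item domains `Q_i` and
the skill domains `S_i` are pairwise disjoint, then the global delineated structure is
discriminative (resp. bi-discriminative) iff every local delineated structure is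
discriminative (resp. bi-discriminative). -/
theorem stmt_19 {ι Q S : Type*} [Nonempty Q] [Nonempty S]
    (Qi : ι → Set Q) (Si : ι → Set S)
    (hQcover : ⋃ i, Qi i = Set.univ) (hScover : ⋃ i, Si i = Set.univ)
    (hQine : ∀ i, (Qi i).Nonempty) (hSine : ∀ i, (Si i).Nonempty)
    (μi : ι → Q → Set (FuzzySet S))
    (hine : ∀ i, ∀ q ∈ Qi i, (μi i q).Nonempty)
    (hinz : ∀ i, ∀ q ∈ Qi i, ∀ C ∈ μi i q, C ≠ 0)
    (hvanish : ∀ i, ∀ q ∈ Qi i, ∀ C ∈ μi i q, ∀ s ∉ Si i, C s = 0)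
    (hincomp : ∀ i, ∀ q ∈ Qi i, ∀ C ∈ μi i q, ∀ D ∈ μi i q, C ≤ D → C = D)
    (μ : Q → Set (FuzzySet S))
    (hμ : ∀ q, μ q = {C | ∃ i, q ∈ Qi i ∧ C ∈ μi i q})
    (hdistr : ∀ q, ∀ C ∈ μ q, ∀ D ∈ μ q, C ≤ D → C = D)
    (Ki : ι → Set (Set Q))
    (hKi : ∀ i, Ki i = (fun F => {q ∈ Qi i | ∃ C ∈ μi i q, C ≤ F}) ''
      {F : FuzzySet S | ∀ s ∉ Si i, F s = 0})
    (hQdisj : ∀ i j, i ≠ j → Disjoint (Qi i) (Qi j))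
    (hSdisj : ∀ i j, i ≠ j → Disjoint (Si i) (Si j)) :
    (Discriminative (delineated μ) ↔
      ∀ i, ∀ q ∈ Qi i, ∀ r ∈ Qi i, q ≠ r → Kq (Ki i) q ≠ Kq (Ki i) r) ∧
    (BiDiscriminative (delineated μ) ↔
      ∀ i, ∀ q ∈ Qi i, ∀ r ∈ Qi i, q ≠ r →
        ¬ Kq (Ki i) q ⊆ Kq (Ki i) r ∧ ¬ Kq (Ki i) r ⊆ Kq (Ki i) q) := by
  classical
  -- uniqueness of index
  have huniq : ∀ {i j : ι} {q : Q}, q ∈ Qi i → q ∈ Qi j → i = j := by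
    intro i j q hi hj
    by_contra h
    exact (hQdisj i j h).le_bot ⟨hi, hj⟩
  have hμeq : ∀ i, ∀ q ∈ Qi i, μ q = μi i q := by
    intro i q hq
    rw [hμ]
    ext C
    constructor
    · rintro ⟨j, hj, hC⟩
      rwa [huniq hj hq] at hC
    · intro hC
      exact ⟨i, hq, hC⟩
  have hidx : ∀ q : Q, ∃ i, q ∈ Qi i := by
    intro q
    have : q ∈ ⋃ i, Qi i := by rw [hQcover]; trivial
    exact Set.mem_iUnion.mp this
  -- the same-block transfer
  have hsame : ∀ i, ∀ q ∈ Qi i, ∀ r ∈ Qi i,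
      ((∀ K ∈ delineated μ, q ∈ K → r ∈ K) ↔ (∀ L ∈ Ki i, q ∈ L → r ∈ L)) := by
    intro i q hq r hr
    constructor
    · intro h L hL hqL
      rw [hKi] at hL
      obtain ⟨F, hF, rfl⟩ := hL
      obtain ⟨hqQ, C, hC, hCF⟩ := hqL
      have hK : pfun μ F ∈ delineated μ := ⟨F, rfl⟩
      have hqK : q ∈ pfun μ F := ⟨C, by rw [hμeq i q hq]; exact hC, hCF⟩
      obtain ⟨C', hC', hC'F⟩ := h _ hK hqK
      rw [hμeq i r hr] at hC'
      exact ⟨hr, C', hC', hC'F⟩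
    · intro h K hK hqK
      obtain ⟨F, rfl⟩ := hK
      obtain ⟨C, hC, hCF⟩ := hqK
      rw [hμeq i q hq] at hC
      set F' : FuzzySet S := fun s => if s ∈ Si i then F s else 0 with hF'def
      have hF'v : ∀ s ∉ Si i, F' s = 0 := by
        intro s hs
        simp only [hF'def]
        exact if_neg hs
      have hL : {x ∈ Qi i | ∃ D ∈ μi i x, D ≤ F'} ∈ Ki i := by
        rw [hKi]
        exact ⟨F', hF'v, rfl⟩
      have hCF' : C ≤ F' := by
        intro s
        by_cases hs : s ∈ Si i
        · have : F' s = F s := by simp only [hF'def]; exact if_pos hs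
          rw [this]
          exact hCF s
        · rw [hvanish i q hq C hC s hs]
          exact unitInterval.nonneg'
      have hqL : q ∈ {x ∈ Qi i | ∃ D ∈ μi i x, D ≤ F'} := ⟨hq, C, hC, hCF'⟩
      obtain ⟨hrQ, C', hC', hC'F'⟩ := h _ hL hqL
      have hF'le : F' ≤ F := by
        intro s
        by_cases hs : s ∈ Si i
        · exact le_of_eq (by simp only [hF'def]; exact if_pos hs)
        · rw [hF'v s hs]
          exact unitInterval.nonneg'
      exact ⟨C', by rw [hμeq i r hr]; exact hC', le_trans hC'F' hF'le⟩
  -- cross-block: states always separate items from different blocks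
  have hcross : ∀ i j, i ≠ j → ∀ q ∈ Qi i, ∀ r ∈ Qi j,
      ¬ (∀ K ∈ delineated μ, q ∈ K → r ∈ K) := by
    intro i j hij q hq r hr h
    set F : FuzzySet S := fun s => if s ∈ Si i then 1 else 0 with hFdef
    obtain ⟨C, hC⟩ := hine i q hq
    have hCF : C ≤ F := by
      intro s
      by_cases hs : s ∈ Si i
      · have : F s = 1 := by simp only [hFdef]; exact if_pos hs
        rw [this]
        exact unitInterval.le_one'
      · rw [hvanish i q hq C hC s hs]
        exact unitInterval.nonneg'
    have hqK : q ∈ pfun μ F := ⟨C, by rw [hμeq i q hq]; exact hC, hCF⟩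
    obtain ⟨D, hD, hDF⟩ := h _ ⟨F, rfl⟩ hqK
    rw [hμeq j r hr] at hD
    apply hinz j r hr D hD
    funext s
    by_cases hs : s ∈ Si j
    · have hsi : s ∉ Si i := fun h' => (hSdisj i j hij).le_bot ⟨h', hs⟩
      have hFs : F s = 0 := by simp only [hFdef]; exact if_neg hsi
      have := hDF s
      rw [hFs] at this
      exact le_antisymm this unitInterval.nonneg'
    · exact hvanish j r hr D hD s hs
  have hsub_iff : ∀ i, ∀ q ∈ Qi i, ∀ r ∈ Qi i,
      (Kq (delineated μ) q ⊆ Kq (delineated μ) r ↔ Kq (Ki i) q ⊆ Kq (Ki i) r) := by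
    intro i q hq r hr
    rw [kq_subset_iff', kq_subset_iff']
    exact hsame i q hq r hr
  have heq_iff : ∀ i, ∀ q ∈ Qi i, ∀ r ∈ Qi i,
      (Kq (delineated μ) q = Kq (delineated μ) r ↔ Kq (Ki i) q = Kq (Ki i) r) := by
    intro i q hq r hr
    rw [Set.Subset.antisymm_iff, Set.Subset.antisymm_iff]
    exact and_congr (hsub_iff i q hq r hr) (hsub_iff i r hr q hq)
  have hcross' : ∀ i j, i ≠ j → ∀ q ∈ Qi i, ∀ r ∈ Qi j,
      ¬ Kq (delineated μ) q ⊆ Kq (delineated μ) r := by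
    intro i j hij q hq r hr hsub
    exact hcross i j hij q hq r hr ((kq_subset_iff' _ q r).mp hsub)
  constructor
  · constructor
    · intro hglob i q hq r hr hqr heq
      exact hglob q r hqr ((heq_iff i q hq r hr).mpr heq)
    · intro hloc q r hqr heq
      obtain ⟨i, hq⟩ := hidx q
      obtain ⟨j, hr⟩ := hidx r
      by_cases hij : i = j
      · subst hij
        exact hloc i q hq r hr hqr ((heq_iff i q hq r hr).mp heq)
      · exact hcross' i j hij q hq r hr (le_of_eq heq)
  · constructor
    · intro hglob i q hq r hr hqr
      obtain ⟨h1, h2⟩ := hglob q r hqr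
      exact ⟨fun hs => h1 ((hsub_iff i q hq r hr).mpr hs),
             fun hs => h2 ((hsub_iff i r hr q hq).mpr hs)⟩
    · intro hloc q r hqr
      obtain ⟨i, hq⟩ := hidx q
      obtain ⟨j, hr⟩ := hidx r
      by_cases hij : i = j
      · subst hij
        obtain ⟨h1, h2⟩ := hloc i q hq r hr hqr
        exact ⟨fun hs => h1 ((hsub_iff i q hq r hr).mp hs),
               fun hs => h2 ((hsub_iff i r hr q hq).mp hs)⟩
      · exact ⟨hcross' i j hij q hq r hr, hcross' j i (Ne.symm hij) r hr q hq⟩
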